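/- Let A be a unital *-subalgebra of L(H), H finite-dimensional, {P_i}_{i=1}^p a maximal family of nonzero pairwise orthogonal self-adjoint projectors in A summing to the identity, such that P_i A P_j ≠ 0 for all i, j. Then all P_i have the same rank q, and p·q = dim H. -/

import Mathlib

set_option linter.unusedSectionVars false


open scoped BigOperators

/-- A family of nonzero, self-adjoint, pairwise orthogonal projectors in `A`. -/
def IsOrthProjFamily {E : Type*} [NormedAddCommGroup E] [InnerProductSpace ℂ E]
    [FiniteDimensional ℂ E] (A : StarSubalgebra ℂ (E →ₗ[ℂ] E))
    {p : ℕ} (P : Fin p → (E →ₗ[ℂ] E)) : Prop :=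
  (∀ i, P i ∈ A) ∧ (∀ i, P i ≠ 0) ∧ (∀ i, star (P i) = P i) ∧
    (∀ i j, P i * P j = if i = j then P i else 0)

/-- Maximality: no such family spans a strictly larger subalgebra. -/
def IsMaximalOrthProjFamily {E : Type*} [NormedAddCommGroup E] [InnerProductSpace ℂ E]
    [FiniteDimensional ℂ E] (A : StarSubalgebra ℂ (E →ₗ[ℂ] E))
    {p : ℕ} (P : Fin p → (E →ₗ[ℂ] E)) : Prop :=
  IsOrthProjFamily A P ∧
    ∀ (m : ℕ) (Q : Fin m → (E →ₗ[ℂ] E)), IsOrthProjFamily A Q →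
      ¬ Algebra.adjoin ℂ (Set.range P) < Algebra.adjoin ℂ (Set.range Q)



section Aux
variable {E : Type*} [NormedAddCommGroup E] [InnerProductSpace ℂ E] [FiniteDimensional ℂ E]
  {A : StarSubalgebra ℂ (E →ₗ[ℂ] E)} {p : ℕ} {P : Fin p → (E →ₗ[ℂ] E)}

lemma ker_star_mul_self (N : E →ₗ[ℂ] E) : LinearMap.ker (star N * N) = LinearMap.ker N := by
  ext x
  simp only [LinearMap.mem_ker, Module.End.mul_apply, LinearMap.star_eq_adjoint]
  constructor
  · intro h
    have : (inner ℂ (N x) (N x) : ℂ) = 0 := by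
      rw [← LinearMap.adjoint_inner_right, h, inner_zero_right]
    simpa using this
  · intro h; rw [h, map_zero]

lemma star_mul_self_ne_zero {N : E →ₗ[ℂ] E} (hN : N ≠ 0) : star N * N ≠ 0 := by
  intro h
  apply hN
  ext x
  have : x ∈ LinearMap.ker (star N * N) := by rw [h]; simp
  rw [ker_star_mul_self] at this
  simpa using this

lemma rank_star_mul_self (N : E →ₗ[ℂ] E) :
    Module.finrank ℂ (LinearMap.range (star N * N)) = Module.finrank ℂ (LinearMap.range N) := by
  have h1 := LinearMap.finrank_range_add_finrank_ker (star N * N)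
  have h2 := LinearMap.finrank_range_add_finrank_ker N
  rw [ker_star_mul_self] at h1
  omega

lemma ker_adjoint_eq (N : E →ₗ[ℂ] E) :
    LinearMap.ker (LinearMap.adjoint N) = (LinearMap.range N)ᗮ := by
  ext x
  simp only [LinearMap.mem_ker, Submodule.mem_orthogonal]
  constructor
  · rintro h u ⟨z, rfl⟩
    rw [← LinearMap.adjoint_inner_right, h, inner_zero_right]
  · intro h
    have : (inner ℂ (LinearMap.adjoint N x) (LinearMap.adjoint N x) : ℂ) = 0 := by
      rw [LinearMap.adjoint_inner_right]
      exact h _ ⟨_, rfl⟩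
    simpa using this

lemma rank_adjoint (N : E →ₗ[ℂ] E) :
    Module.finrank ℂ (LinearMap.range (LinearMap.adjoint N)) = Module.finrank ℂ (LinearMap.range N) := by
  have h1 := LinearMap.finrank_range_add_finrank_ker (LinearMap.adjoint N)
  have h2 := LinearMap.finrank_range_add_finrank_ker N
  rw [ker_adjoint_eq] at h1
  have h3 := Submodule.finrank_add_finrank_orthogonal (K := LinearMap.range N) (𝕜 := ℂ) (E := E)
  omega

lemma rank_mul_self_star (N : E →ₗ[ℂ] E) :
    Module.finrank ℂ (LinearMap.range (N * star N)) = Module.finrank ℂ (LinearMap.range N) := by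
  have h1 : N * star N = star (star N) * (star N) := by rw [star_star]
  rw [h1, rank_star_mul_self, LinearMap.star_eq_adjoint, rank_adjoint]

lemma range_smul_eq {c : ℂ} (hc : c ≠ 0) (T : E →ₗ[ℂ] E) :
    LinearMap.range (c • T) = LinearMap.range T := by
  apply le_antisymm
  · rintro _ ⟨x, rfl⟩; exact ⟨c • x, by simp [map_smul]⟩
  · rintro _ ⟨x, rfl⟩
    exact ⟨c⁻¹ • x, by simp [map_smul, smul_smul, inv_mul_cancel₀ hc]⟩


/-- adjoin of the range of an orthogonal projector family summing to 1 is its linear span -/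
lemma adjoin_le_span (hsum : ∑ i, P i = 1)
    (hmul : ∀ i j, P i * P j = if i = j then P i else 0) :
    (Algebra.adjoin ℂ (Set.range P) : Set (E →ₗ[ℂ] E)) ⊆
      (Submodule.span ℂ (Set.range P) : Submodule ℂ (E →ₗ[ℂ] E)) := by
  have h1 : (1 : E →ₗ[ℂ] E) ∈ Submodule.span ℂ (Set.range P) := by
    rw [← hsum]
    exact Submodule.sum_mem _ fun i _ => Submodule.subset_span ⟨i, rfl⟩
  have hm : ∀ x y : (E →ₗ[ℂ] E), x ∈ Submodule.span ℂ (Set.range P) →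
      y ∈ Submodule.span ℂ (Set.range P) → x * y ∈ Submodule.span ℂ (Set.range P) := by
    intro x y hx hy
    induction hx using Submodule.span_induction with
    | mem x hx =>
      induction hy using Submodule.span_induction with
      | mem y hy =>
        obtain ⟨i, rfl⟩ := hx; obtain ⟨k, rfl⟩ := hy
        rw [hmul]
        split
        · exact Submodule.subset_span ⟨i, rfl⟩
        · exact Submodule.zero_mem _
      | zero => rw [mul_zero]; exact Submodule.zero_mem _
      | add a b ha hb iha ihb => rw [mul_add]; exact Submodule.add_mem _ iha ihb
      | smul c a ha iha => rw [mul_smul_comm]; exact Submodule.smul_mem _ _ iha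
    | zero => rw [zero_mul]; exact Submodule.zero_mem _
    | add a b ha hb iha ihb => rw [add_mul]; exact Submodule.add_mem _ iha ihb
    | smul c a ha iha => rw [smul_mul_assoc]; exact Submodule.smul_mem _ _ iha
  let S : Subalgebra ℂ (E →ₗ[ℂ] E) :=
    Submodule.toSubalgebra (Submodule.span ℂ (Set.range P)) h1 hm
  have : Algebra.adjoin ℂ (Set.range P) ≤ S :=
    Algebra.adjoin_le (fun x hx => Submodule.subset_span hx)
  exact fun x hx => this hx

lemma min_proj (hP : IsMaximalOrthProjFamily A P) (hsum : ∑ i, P i = 1) (j : Fin p)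
    {Q : E →ₗ[ℂ] E} (hQA : Q ∈ A) (hQs : star Q = Q) (hQi : Q * Q = Q)
    (hQPj : Q * P j = Q) (hPjQ : P j * Q = Q) : Q = 0 ∨ Q = P j := by
  obtain ⟨⟨hmem, hne, hstar, hmul⟩, hmax⟩ := hP
  by_contra hcon
  push_neg at hcon
  obtain ⟨hQ0, hQP⟩ := hcon
  -- the refined family
  set R : Fin (p + 1) → (E →ₗ[ℂ] E) := Fin.snoc (Function.update P j Q) (P j - Q) with hR
  have hRc : ∀ i : Fin p, R i.castSucc = if i = j then Q else P i := by
    intro i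
    simp only [hR, Fin.snoc_castSucc, Function.update_apply]
  have hRl : R (Fin.last p) = P j - Q := by simp only [hR, Fin.snoc_last]
  -- helper products
  have hQPk : ∀ k, k ≠ j → Q * P k = 0 := by
    intro k hk
    rw [← hQPj, mul_assoc, hmul, if_neg (fun h => hk h.symm), mul_zero]
  have hPkQ : ∀ k, k ≠ j → P k * Q = 0 := by
    intro k hk
    rw [← hPjQ, ← mul_assoc, hmul, if_neg hk, zero_mul]
  have hPjPj : P j * P j = P j := by rw [hmul, if_pos rfl]
  have hfam : IsOrthProjFamily A R := by
    refine ⟨?_, ?_, ?_, ?_⟩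
    · intro i
      refine Fin.lastCases ?_ ?_ i
      · rw [hRl]; exact sub_mem (hmem j) hQA
      · intro i; rw [hRc]; split
        · exact hQA
        · exact hmem i
    · intro i
      refine Fin.lastCases ?_ ?_ i
      · rw [hRl]; exact sub_ne_zero_of_ne (Ne.symm hQP)
      · intro i; rw [hRc]; split
        · exact hQ0
        · exact hne i
    · intro i
      refine Fin.lastCases ?_ ?_ i
      · rw [hRl, star_sub, hstar, hQs]
      · intro i; rw [hRc]; split
        · exact hQs
        · exact hstar i
    · intro i k
      have hlc : ∀ m : Fin p, Fin.last p ≠ m.castSucc := fun m => (Fin.castSucc_lt_last m).ne'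
      refine Fin.lastCases ?_ ?_ i
      · refine Fin.lastCases ?_ ?_ k
        · rw [if_pos rfl, hRl, sub_mul, mul_sub, mul_sub, hPjPj, hQi, hPjQ, hQPj,
            sub_self, sub_zero]
        · intro k
          rw [if_neg (hlc k), hRl, hRc]
          by_cases hkj : k = j
          · rw [if_pos hkj, sub_mul, hPjQ, hQi, sub_self]
          · rw [if_neg hkj, sub_mul, hmul, if_neg (fun h => hkj h.symm), hQPk k hkj, sub_self]
      · intro i
        refine Fin.lastCases ?_ ?_ k
        · rw [if_neg (fun h => hlc i h.symm), hRl, hRc]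
          by_cases hij : i = j
          · rw [if_pos hij, mul_sub, hQPj, hQi, sub_self]
          · rw [if_neg hij, mul_sub, hmul, if_neg hij, hPkQ i hij, sub_self]
        · intro k
          by_cases hik : i = k
          · subst hik
            rw [if_pos rfl, hRc]
            by_cases hij : i = j
            · rw [if_pos hij, hQi]
            · rw [if_neg hij, hmul, if_pos rfl]
          · rw [if_neg (fun h => hik (Fin.castSucc_inj.mp h)), hRc, hRc]
            by_cases hij : i = j <;> by_cases hkj : k = j
            · exact absurd (hij.trans hkj.symm) hik
            · rw [if_pos hij, if_neg hkj, hQPk k hkj]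
            · rw [if_neg hij, if_pos hkj, hPkQ i hij]
            · rw [if_neg hij, if_neg hkj, hmul, if_neg hik]
  -- strict inclusion of adjoins
  have hle : Algebra.adjoin ℂ (Set.range P) ≤ Algebra.adjoin ℂ (Set.range R) := by
    apply Algebra.adjoin_le
    rintro _ ⟨i, rfl⟩
    by_cases hij : i = j
    · subst hij
      have h1 : Q ∈ Algebra.adjoin ℂ (Set.range R) :=
        Algebra.subset_adjoin ⟨i.castSucc, by rw [hRc, if_pos rfl]⟩
      have h2 : P i - Q ∈ Algebra.adjoin ℂ (Set.range R) :=
        Algebra.subset_adjoin ⟨Fin.last p, hRl⟩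
      have := add_mem h1 h2
      rwa [add_sub_cancel] at this
    · exact Algebra.subset_adjoin ⟨i.castSucc, by rw [hRc, if_neg hij]⟩
  have hQnot : Q ∉ Algebra.adjoin ℂ (Set.range P) := by
    intro hQin
    have hsp : Q ∈ Submodule.span ℂ (Set.range P) := adjoin_le_span hsum hmul hQin
    obtain ⟨c, hc⟩ := (Submodule.mem_span_range_iff_exists_fun ℂ).mp hsp
    have h1 : Q = c j • P j := by
      rw [← hQPj, ← hc, Finset.sum_mul]
      rw [Finset.sum_eq_single j]
      · rw [smul_mul_assoc, hPjPj]
      · intro k _ hkj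
        rw [smul_mul_assoc, hmul, if_neg hkj, smul_zero]
      · intro h; exact absurd (Finset.mem_univ j) h
    have h2 : (c j * c j) • P j = c j • P j := by
      have hq := hQi
      rw [h1, smul_mul_assoc, mul_smul_comm, hPjPj, smul_smul] at hq
      exact hq
    have h3 : (c j * c j - c j) • P j = 0 := by rw [sub_smul, h2, sub_self]
    rcases smul_eq_zero.mp h3 with h | h
    · have hf : c j * (c j - 1) = 0 := by ring_nf; linear_combination h
      rcases mul_eq_zero.mp hf with h' | h'
      · exact hQ0 (by rw [h1, h', zero_smul])
      · exact hQP (by rw [h1, sub_eq_zero.mp h', one_smul])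
    · exact hne j h
  have hlt : Algebra.adjoin ℂ (Set.range P) < Algebra.adjoin ℂ (Set.range R) := by
    refine lt_of_le_of_ne hle (fun h => hQnot ?_)
    rw [h]
    exact Algebra.subset_adjoin ⟨j.castSucc, by rw [hRc, if_pos rfl]⟩
  exact hmax (p + 1) R hfam hlt

open Polynomial in
lemma exists_smul_of_min {Pj : E →ₗ[ℂ] E} (hPne : Pj ≠ 0)
    (hmin : ∀ Q : E →ₗ[ℂ] E, Q ∈ A → star Q = Q → Q * Q = Q → Q * Pj = Q → Pj * Q = Q →
      Q = 0 ∨ Q = Pj)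
    {B : E →ₗ[ℂ] E} (hBA : B ∈ A) (hBs : star B = B) (hBPj : B * Pj = B) (hPjB : Pj * B = B) :
    ∃ c : ℂ, B = c • Pj := by
  classical
  by_cases hB0 : B = 0
  · exact ⟨0, by rw [hB0, zero_smul]⟩
  have hsym : B.IsSymmetric := (LinearMap.isSymmetric_iff_isSelfAdjoint B).mpr hBs
  have hn : Module.finrank ℂ E = Module.finrank ℂ E := rfl
  set b := hsym.eigenvectorBasis hn with hb
  set μ := hsym.eigenvalues hn with hμ
  have hev : ∀ i, Module.End.HasEigenvector B ((μ i : ℂ)) (b i) :=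
    fun i => hsym.hasEigenvector_eigenvectorBasis hn i
  set s : Finset ℝ := insert 0 (Finset.image μ Finset.univ) with hs
  have hmem_s : ∀ i, μ i ∈ s := fun i =>
    Finset.mem_insert_of_mem (Finset.mem_image_of_mem μ (Finset.mem_univ i))
  have h0s : (0 : ℝ) ∈ s := Finset.mem_insert_self 0 _
  set f₀ : ℝ → ℝ[X] := fun t => Lagrange.interpolate s id (fun x => if x = t then 1 else 0)
    with hf₀
  set f : ℝ → ℂ[X] := fun t => (f₀ t).map (algebraMap ℝ ℂ) with hf
  set Qf : ℝ → (E →ₗ[ℂ] E) := fun t => Polynomial.aeval B (f t) with hQf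
  have heval0 : ∀ t, ∀ x ∈ s, (f₀ t).eval x = if x = t then 1 else 0 := by
    intro t x hx
    simp only [hf₀]
    exact Lagrange.eval_interpolate_at_node _ (Set.injOn_id _) hx
  have heval : ∀ t, ∀ x ∈ s, (f t).eval (x : ℂ) = if x = t then 1 else 0 := by
    intro t x hx
    simp only [hf]
    rw [Polynomial.eval_map]
    have : (algebraMap ℝ ℂ) x = (x : ℂ) := rfl
    rw [← this, Polynomial.eval₂_at_apply, heval0 t x hx]
    split <;> simp
  have hQb : ∀ t i, Qf t (b i) = (if μ i = t then (1:ℂ) else 0) • b i := by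
    intro t i
    simp only [hQf]
    rw [Module.End.aeval_apply_of_hasEigenvector (hev i), heval t (μ i) (hmem_s i)]
  -- membership in A
  have hQA : ∀ t, Qf t ∈ A := by
    intro t
    have h1 : Qf t ∈ Algebra.adjoin ℂ ({B} : Set (E →ₗ[ℂ] E)) := by
      rw [Algebra.adjoin_singleton_eq_range_aeval]
      exact ⟨f t, by simp only [hQf]; rfl⟩
    have h2 : Algebra.adjoin ℂ ({B} : Set (E →ₗ[ℂ] E)) ≤ A.toSubalgebra :=
      Algebra.adjoin_le (by simpa using hBA)
    exact h2 h1
  -- self-adjointness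
  have hQstar : ∀ t, star (Qf t) = Qf t := by
    intro t
    simp only [hQf]
    rw [Polynomial.aeval_eq_sum_range, star_sum]
    apply Finset.sum_congr rfl
    intro k _
    rw [star_smul, star_pow, hBs]
    congr 1
    simp only [hf]
    rw [Polynomial.coeff_map]
    exact Complex.conj_ofReal _
  -- idempotency
  have hQidem : ∀ t, Qf t * Qf t = Qf t := by
    intro t
    apply b.toBasis.ext
    intro i
    rw [OrthonormalBasis.coe_toBasis, Module.End.mul_apply, hQb, map_smul, hQb, smul_smul]
    congr 1
    split <;> simp
  -- compatibility with Pj for t ≠ 0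
  have hQPj : ∀ t, t ≠ 0 → Qf t * Pj = Qf t ∧ Pj * Qf t = Qf t := by
    intro t ht
    have hdvd : X ∣ f₀ t := by
      rw [Polynomial.X_dvd_iff, Polynomial.coeff_zero_eq_eval_zero, heval0 t 0 h0s,
        if_neg (Ne.symm ht)]
    obtain ⟨g, hg⟩ := hdvd
    have hft : f t = X * g.map (algebraMap ℝ ℂ) := by
      simp only [hf]
      rw [hg, Polynomial.map_mul, Polynomial.map_X]
    have h1 : Qf t = B * Polynomial.aeval B (g.map (algebraMap ℝ ℂ)) := by
      simp only [hQf]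
      rw [hft, map_mul, Polynomial.aeval_X]
    have h2 : Qf t = Polynomial.aeval B (g.map (algebraMap ℝ ℂ)) * B := by
      simp only [hQf]
      rw [hft, mul_comm X _, map_mul, Polynomial.aeval_X]
    constructor
    · rw [h2, mul_assoc, hBPj, ← h2]
    · rw [h1, ← mul_assoc, hPjB, ← h1]
  -- existence of nonzero eigenvalue
  have hex : ∃ i₀, μ i₀ ≠ 0 := by
    by_contra hall
    push_neg at hall
    apply hB0
    apply b.toBasis.ext
    intro i
    rw [OrthonormalBasis.coe_toBasis, (hev i).apply_eq_smul, hall i]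
    simp
  obtain ⟨i₀, hi₀⟩ := hex
  -- each projection for a nonzero eigenvalue equals Pj
  have hproj : ∀ t : ℝ, t ≠ 0 → (∃ i, μ i = t) → Qf t = Pj := by
    intro t ht ⟨i, hi⟩
    rcases hmin (Qf t) (hQA t) (hQstar t) (hQidem t) (hQPj t ht).1 (hQPj t ht).2 with h | h
    · exfalso
      have := hQb t i
      rw [h, if_pos hi] at this
      simp only [LinearMap.zero_apply, one_smul] at this
      exact b.toBasis.ne_zero i (by rw [OrthonormalBasis.coe_toBasis]; exact this.symm)
    · exact h
  have hPj₀ : Qf (μ i₀) = Pj := hproj (μ i₀) hi₀ ⟨i₀, rfl⟩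
  -- all eigenvalues are 0 or μ i₀
  have hall : ∀ i, μ i = 0 ∨ μ i = μ i₀ := by
    intro i
    by_contra hcon
    push_neg at hcon
    obtain ⟨h1, h2⟩ := hcon
    have hPj₁ : Qf (μ i) = Pj := hproj (μ i) h1 ⟨i, rfl⟩
    have hzero : Qf (μ i₀) * Qf (μ i) = 0 := by
      apply b.toBasis.ext
      intro k
      rw [OrthonormalBasis.coe_toBasis, Module.End.mul_apply, hQb, map_smul, hQb, smul_smul]
      simp only [LinearMap.zero_apply]
      rcases eq_or_ne (μ k) (μ i) with h | h
      · have h0 : ¬ μ k = μ i₀ := fun hh => h2 (h.symm.trans hh)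
        simp [h, h0, h2]
      · simp [h]
    rw [hPj₀, hPj₁] at hzero
    have : Pj = 0 := by
      have hPP : Pj * Pj = Pj := by rw [← hPj₀, hQidem]
      rw [← hPP, hzero]
    exact hPne this
  -- conclude B = μ i₀ • Pj
  refine ⟨(μ i₀ : ℂ), ?_⟩
  apply b.toBasis.ext
  intro i
  rw [OrthonormalBasis.coe_toBasis, (hev i).apply_eq_smul, LinearMap.smul_apply, ← hPj₀,
    hQb, smul_smul]
  rcases hall i with h | h
  · rw [h, if_neg (fun hh => hi₀ hh.symm)]
    simp
  · rw [if_pos h, h, mul_one]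


end Aux
theorem projectors_same_rank
    {E : Type*} [NormedAddCommGroup E] [InnerProductSpace ℂ E] [FiniteDimensional ℂ E]
    (A : StarSubalgebra ℂ (E →ₗ[ℂ] E)) {p : ℕ} (P : Fin p → (E →ₗ[ℂ] E))
    (hP : IsMaximalOrthProjFamily A P) (hsum : ∑ i, P i = 1)
    (hclass : ∀ i j, ∃ M ∈ A, P i * M * P j ≠ 0) :
    ∃ q : ℕ, (∀ i, Module.finrank ℂ (LinearMap.range (P i)) = q) ∧
      p * q = Module.finrank ℂ E := by
  classical
  obtain ⟨⟨hmem, hne, hstar, hmul⟩, -⟩ := id hP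
  have hproj : ∀ i, LinearMap.IsProj (LinearMap.range (P i)) (P i) := by
    intro i
    refine ⟨fun x => LinearMap.mem_range_self _ x, ?_⟩
    rintro x ⟨y, rfl⟩
    have := LinearMap.ext_iff.mp (hmul i i) y
    rwa [if_pos rfl, Module.End.mul_apply] at this
  have htr : ∀ i, LinearMap.trace ℂ E (P i)
      = (Module.finrank ℂ (LinearMap.range (P i)) : ℂ) := fun i => (hproj i).trace
  have hPP : ∀ i, P i * P i = P i := fun i => by rw [hmul, if_pos rfl]
  have hrank : ∀ i j, Module.finrank ℂ (LinearMap.range (P i))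
      = Module.finrank ℂ (LinearMap.range (P j)) := by
    intro i j
    obtain ⟨M, hMA, hMne⟩ := hclass i j
    set N := P i * M * P j with hN
    have hNA : N ∈ A := mul_mem (mul_mem (hmem i) hMA) (hmem j)
    have hNPj : N * P j = N := by rw [hN, mul_assoc, hPP j]
    have hPiN : P i * N = N := by rw [hN, ← mul_assoc, ← mul_assoc, hPP i]
    have hPjsN : P j * star N = star N := by
      have := congrArg star hNPj
      rwa [star_mul, hstar j] at this
    have hsNPi : star N * P i = star N := by
      have := congrArg star hPiN
      rwa [star_mul, hstar i] at this
    have hmin : ∀ (j : Fin p) (Q : E →ₗ[ℂ] E), Q ∈ A → star Q = Q → Q * Q = Q →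
        Q * P j = Q → P j * Q = Q → Q = 0 ∨ Q = P j :=
      fun j Q a b c d e => min_proj hP hsum j a b c d e
    -- B = N† N = c • P j
    have hBA : star N * N ∈ A := mul_mem (star_mem hNA) hNA
    have hBs : star (star N * N) = star N * N := by rw [star_mul, star_star]
    have hBPj : (star N * N) * P j = star N * N := by rw [mul_assoc, hNPj]
    have hPjB : P j * (star N * N) = star N * N := by rw [← mul_assoc, hPjsN]
    obtain ⟨c, hc⟩ := exists_smul_of_min (hne j) (hmin j)
      hBA hBs hBPj hPjB
    have hcne : c ≠ 0 := by
      intro h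
      rw [h, zero_smul] at hc
      exact star_mul_self_ne_zero hMne hc
    -- B' = N N† = c' • P i
    have hB'A : N * star N ∈ A := mul_mem hNA (star_mem hNA)
    have hB's : star (N * star N) = N * star N := by rw [star_mul, star_star]
    have hB'Pi : (N * star N) * P i = N * star N := by rw [mul_assoc, hsNPi]
    have hPiB' : P i * (N * star N) = N * star N := by rw [← mul_assoc, hPiN]
    obtain ⟨c', hc'⟩ := exists_smul_of_min (hne i) (hmin i)
      hB'A hB's hB'Pi hPiB'
    have hc'ne : c' ≠ 0 := by
      intro h
      rw [h, zero_smul] at hc'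
      have : star (star N) * star N = 0 := by rwa [star_star]
      exact star_mul_self_ne_zero (fun hh => hMne (by
        have := congrArg star hh
        rwa [star_star, star_zero] at this)) this
    calc Module.finrank ℂ (LinearMap.range (P i))
        = Module.finrank ℂ (LinearMap.range (c' • P i)) := by rw [range_smul_eq hc'ne]
      _ = Module.finrank ℂ (LinearMap.range (N * star N)) := by rw [← hc']
      _ = Module.finrank ℂ (LinearMap.range N) := rank_mul_self_star N
      _ = Module.finrank ℂ (LinearMap.range (star N * N)) := (rank_star_mul_self N).symm
      _ = Module.finrank ℂ (LinearMap.range (c • P j)) := by rw [← hc]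
      _ = Module.finrank ℂ (LinearMap.range (P j)) := by rw [range_smul_eq hcne]
  rcases Nat.eq_zero_or_pos p with hp | hp
  · subst hp
    refine ⟨0, fun i => i.elim0, ?_⟩
    have h1 : (1 : E →ₗ[ℂ] E) = 0 := by rw [← hsum]; simp
    have hsing : Subsingleton E := ⟨fun x y => by
      have hx := LinearMap.ext_iff.mp h1 x
      have hy := LinearMap.ext_iff.mp h1 y
      simp only [Module.End.one_apply, LinearMap.zero_apply] at hx hy
      rw [hx, hy]⟩
    rw [Module.finrank_zero_iff.mpr hsing]
  · set i0 : Fin p := ⟨0, hp⟩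
    set q := Module.finrank ℂ (LinearMap.range (P i0)) with hq
    refine ⟨q, fun i => hrank i i0, ?_⟩
    have h1 : (Module.finrank ℂ E : ℂ) = ∑ i : Fin p, (q : ℂ) := by
      rw [← LinearMap.trace_one ℂ E, ← hsum, map_sum]
      exact Finset.sum_congr rfl fun i _ => (htr i).trans (by rw [hrank i i0])
    rw [Finset.sum_const, Finset.card_univ, Fintype.card_fin, nsmul_eq_mul] at h1
    have : ((p * q : ℕ) : ℂ) = (Module.finrank ℂ E : ℂ) := by push_cast; rw [h1]
    exact_mod_cast this
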